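/- Let q = m/n with m, n coprime, 0 < m/n < 1/2. Then there exists N ∈ ℕ such that σ^N(rhe(q)) = lhe(q), i.e. the right-hand endpoint sequence shifted N times equals the left-hand endpoint sequence. -/

import Mathlib

/-- `κ_i(q)`: `κ_1(q) = ⌊1/q⌋ − 1` and `κ_i(q) = ⌊i/q⌋ − ⌊(i−1)/q⌋ − 2` for `i ≥ 2`. -/
noncomputable def kappaZ (q : ℝ) (i : ℕ) : ℤ :=
  if i = 1 then ⌊1 / q⌋ - 1 else ⌊(i : ℝ) / q⌋ - ⌊((i : ℝ) - 1) / q⌋ - 2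

noncomputable def kapN (q : ℝ) (i : ℕ) : ℕ := (kappaZ q i).toNat

/-- `c_q = 10^{κ_1}11 0^{κ_2}11 … 11 0^{κ_m}1`, as the concatenation of the blocks
`1 0^{κ_i} 1` for `i = 1,…,m`. -/
noncomputable def cword (q : ℝ) (m : ℕ) : List Bool :=
  (List.range m).flatMap (fun i => [true] ++ List.replicate (kapN q (i + 1)) false ++ [true])

/-- `w_q`, obtained from `c_q = w_q 01` by removing the final `01`. -/
noncomputable def wword (q : ℝ) (m : ℕ) : List Bool := (cword q m).dropLast.dropLast

/-- the periodic one-sided infinite sequence `w^∞`. -/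
def perSeq (w : List Bool) : ℕ → Bool := fun i => w.getD (i % w.length) true

/-- `lhe(q) = (w_q 1)^∞`. -/
noncomputable def lhe (q : ℝ) (m : ℕ) : ℕ → Bool := perSeq (wword q m ++ [true])

/-- `rhe(q) = 10(ŵ_q 1)^∞`, where `ŵ_q` is the reverse of `w_q`. -/
noncomputable def rhe (q : ℝ) (m : ℕ) : ℕ → Bool := fun i =>
  if i = 0 then true else if i = 1 then false
  else perSeq ((wword q m).reverse ++ [true]) (i - 2)

/- ----------------- auxiliary lemmas ----------------- -/

def gfun (m n j : ℕ) : Bool := decide (0 < (j+1)*m % n ∧ (j+1)*m % n < 2*m)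


lemma floor_nat_div (a b : ℕ) : ⌊(a : ℝ) / b⌋ = ((a / b : ℕ) : ℤ) := by
  rw [← Int.natCast_floor_eq_floor (by positivity), Nat.floor_div_eq_div]

variable {m n : ℕ}

lemma floor_div_q (hm : 0 < m) (h2m : 2*m < n) (q : ℝ) (hq : q = (m : ℝ) / n) (a : ℕ) :
    ⌊(a : ℝ) / q⌋ = ((a * n / m : ℕ) : ℤ) := by
  have hm' : (m:ℝ) ≠ 0 := Nat.cast_ne_zero.2 (by omega)
  have hn' : (n:ℝ) ≠ 0 := Nat.cast_ne_zero.2 (by omega)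
  have h : (a : ℝ) / q = ((a * n : ℕ) : ℝ) / (m : ℕ) := by
    rw [hq]; push_cast; field_simp
  rw [h, floor_nat_div]

lemma kapN_one (hm : 0 < m) (h2m : 2*m < n) (q : ℝ) (hq : q = (m : ℝ) / n) :
    kapN q 1 = n / m - 1 := by
  have h := floor_div_q hm h2m q hq 1
  have h2 : 2 ≤ n / m := (Nat.le_div_iff_mul_le hm).2 (by omega)
  simp only [Nat.cast_one, one_mul] at h
  unfold kapN kappaZ
  rw [if_pos rfl, h]
  omega

lemma kapN_succ (hm : 0 < m) (h2m : 2*m < n) (q : ℝ) (hq : q = (m : ℝ) / n)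
    (t : ℕ) (ht : 1 ≤ t) :
    kapN q (t+1) = (t+1) * n / m - t * n / m - 2 ∧ t * n / m + 2 ≤ (t+1) * n / m := by
  have h1 := floor_div_q hm h2m q hq (t+1)
  have h2 := floor_div_q hm h2m q hq t
  have hdivle : t * n / m + n / m ≤ (t * n + n) / m := Nat.add_div_le_add_div _ _ _
  have h2' : 2 ≤ n / m := (Nat.le_div_iff_mul_le hm).2 (by omega)
  have hre : (t+1) * n = t * n + n := by ring
  rw [hre] at h1 ⊢
  have hmono : t * n / m + 2 ≤ (t * n + n) / m := by omega
  refine ⟨?_, hmono⟩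
  unfold kapN kappaZ
  rw [if_neg (by omega), show ((t+1 : ℕ) : ℝ) - 1 = ((t : ℕ) : ℝ) by push_cast; ring, h1, h2]
  omega

lemma map_range_block (f : ℕ → Bool) (κ : ℕ) (h0 : f 0 = true)
    (hend : f (κ+1) = true) (hmid : ∀ p, 0 < p → p ≤ κ → f p = false) :
    (List.range (κ+2)).map f = [true] ++ List.replicate κ false ++ [true] := by
  rw [show κ + 2 = 1 + κ + 1 by ring, List.range_succ, List.range_add, List.map_append,
    List.map_append]
  congr 1
  · congr 1
    · simp [List.range_succ, h0]
    · refine List.eq_replicate_iff.2 ⟨by simp, ?_⟩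
      intro b hb
      simp only [List.map_map, List.mem_map, List.mem_range] at hb
      obtain ⟨p, hp, rfl⟩ := hb
      exact hmid (1 + p) (by omega) (by omega)
  · simp [show 1 + κ = κ + 1 by ring, hend]

lemma block0_start {m n : ℕ} (hm : 0 < m) (h2m : 2*m < n) : gfun m n 0 = true := by
  simp only [gfun, zero_add, one_mul, decide_eq_true_eq]
  rw [Nat.mod_eq_of_lt (by omega)]
  omega

lemma block0_mid {m n : ℕ} (hm : 0 < m) (h2m : 2*m < n) (p : ℕ) (hp0 : 0 < p) (hp : p ≤ n/m - 1) :
    gfun m n p = false := by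
  have h2' : 2 ≤ n / m := (Nat.le_div_iff_mul_le hm).2 (by omega)
  have hle : (p+1)*m ≤ (n/m)*m := Nat.mul_le_mul_right m (by omega)
  have hle2 : (n/m)*m ≤ n := Nat.div_mul_le_self n m
  have h2le : 2*m ≤ (p+1)*m := Nat.mul_le_mul_right m (by omega)
  simp only [gfun, decide_eq_false_iff_not, not_and, not_lt]
  rcases eq_or_lt_of_le (hle.trans hle2) with h | h
  · rw [h, Nat.mod_self]; omega
  · rw [Nat.mod_eq_of_lt h]; omega

lemma block0_end {m n : ℕ} (hm : 0 < m) (h2m : 2*m < n) : gfun m n (n/m) = true := by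
  have hdm : m * (n/m) + n % m = n := Nat.div_add_mod n m
  have hρ : n % m < m := Nat.mod_lt _ hm
  have hval : (n/m + 1)*m = (m - n % m) + 1*n := by
    have h' : (n/m + 1)*m = m*(n/m) + m := by ring
    omega
  simp only [gfun, decide_eq_true_eq]
  rw [hval, Nat.add_mul_mod_self_right, Nat.mod_eq_of_lt (by omega)]
  omega

lemma blockt {m n : ℕ} (hm : 0 < m) (h2m : 2*m < n) (hcop : Nat.Coprime m n) (t : ℕ)
    (ht : 1 ≤ t) (htm : t < m) (hBA : t*n/m + 2 ≤ (t*n+n)/m) :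
    gfun m n (t*n/m + 1) = true ∧
    gfun m n (t*n/m + 1 + ((t*n+n)/m - t*n/m - 2) + 1) = true ∧
    (∀ p, 0 < p → p ≤ (t*n+n)/m - t*n/m - 2 → gfun m n (t*n/m + 1 + p) = false) := by
  set A := t*n/m with hAdef
  set B := (t*n+n)/m with hBdef
  set ρ := (t*n) % m with hρdef
  set ρ' := (t*n+n) % m with hρ'def
  have hA : m * A + ρ = t*n := Nat.div_add_mod (t*n) m
  have hB : m * B + ρ' = t*n+n := Nat.div_add_mod (t*n+n) m
  have hρ : ρ < m := Nat.mod_lt _ hm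
  have hρ' : ρ' < m := Nat.mod_lt _ hm
  have hρ0 : 0 < ρ := by
    rcases Nat.eq_zero_or_pos ρ with h | h
    · exfalso
      have hdvd : m ∣ t*n := Nat.dvd_of_mod_eq_zero h
      have : m ∣ t := hcop.dvd_of_dvd_mul_right hdvd
      exact absurd (Nat.le_of_dvd (by omega) this) (by omega)
    · exact h
  refine ⟨?_, ?_, ?_⟩
  · -- start: (A+2)*m % n = 2m - ρ
    have hval : (A+2)*m = (2*m - ρ) + t*n := by
      have h' : (A+2)*m = m*A + 2*m := by ring
      omega
    simp only [gfun, decide_eq_true_eq, show A + 1 + 1 = A + 2 from rfl]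
    rw [hval, Nat.add_mul_mod_self_right, Nat.mod_eq_of_lt (by omega)]
    omega
  · -- end: index A+1+(B-A-2)+1 = B, (B+1)*m % n = m - ρ'
    have hidx : A + 1 + (B - A - 2) + 1 = B := by omega
    have hval : (B+1)*m = (m - ρ') + (t+1)*n := by
      have h' : (B+1)*m = m*B + m := by ring
      have h'' : (t+1)*n = t*n + n := by ring
      omega
    simp only [gfun, decide_eq_true_eq]
    rw [hidx, hval, Nat.add_mul_mod_self_right, Nat.mod_eq_of_lt (by omega)]
    omega
  · intro p hp0 hp
    have h3 : 3*m ≤ (p+2)*m := Nat.mul_le_mul_right m (by omega)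
    have h4 : (p+2)*m ≤ (B-A)*m := Nat.mul_le_mul_right m (by omega)
    have h5 : (B-A)*m = B*m - A*m := Nat.sub_mul B A m
    have h6 : B*m = m*B := Nat.mul_comm B m
    have h7 : A*m = m*A := Nat.mul_comm A m
    have hub : (p+2)*m + ρ' ≤ n + ρ := by omega
    have hval : (A+1+p+1)*m = ((p+2)*m - ρ) + t*n := by
      have h' : (A+1+p+1)*m = m*A + (p+2)*m := by ring
      omega
    simp only [gfun, decide_eq_false_iff_not, not_and, not_lt]
    rw [hval, Nat.add_mul_mod_self_right]
    rcases eq_or_lt_of_le (show (p+2)*m - ρ ≤ n by omega) with h | h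
    · rw [h, Nat.mod_self]; omega
    · rw [Nat.mod_eq_of_lt h]; omega

lemma cword_eq {m n : ℕ} (hm : 0 < m) (h2m : 2*m < n) (hcop : Nat.Coprime m n)
    (q : ℝ) (hq : q = (m : ℝ) / n) :
    cword q m = (List.range (n+1)).map (gfun m n) := by
  have h2' : 2 ≤ n / m := (Nat.le_div_iff_mul_le hm).2 (by omega)
  have main : ∀ t, t ≤ m → (List.range t).flatMap
      (fun i => [true] ++ List.replicate (kapN q (i + 1)) false ++ [true]) =
      (List.range (if t = 0 then 0 else t*n/m + 1)).map (gfun m n) := by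
    intro t
    induction t with
    | zero => simp
    | succ t ih =>
      intro ht
      rw [List.range_succ, List.flatMap_append, ih (by omega)]
      rcases Nat.eq_zero_or_pos t with rfl | ht1
      · simp only [if_neg (Nat.one_ne_zero), if_pos rfl, List.range_zero, List.map_nil,
          List.flatMap_cons, List.flatMap_nil, List.nil_append, List.append_nil]
        rw [kapN_one hm h2m q hq, show (0+1)*n/m + 1 = ((n/m - 1) + 2) by
            rw [show (0+1)*n = n by ring]; omega,
          ← map_range_block (gfun m n) (n/m - 1) (block0_start hm h2m)
            (by rw [show n/m - 1 + 1 = n/m by omega]; exact block0_end hm h2m)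
            (block0_mid hm h2m)]
        simp
      · have hk := kapN_succ hm h2m q hq t ht1
        have hre : (t+1)*n = t*n + n := by ring
        rw [hre] at hk
        obtain ⟨hkval, hBA⟩ := hk
        set A := t*n/m with hA
        set B := (t*n+n)/m with hB
        have hLL : (t+1)*n/m + 1 = (A + 1) + ((B - A - 2) + 2) := by rw [hre]; omega
        have hsplit : (List.range ((A + 1) + ((B - A - 2) + 2))).map (gfun m n) =
            (List.range (A+1)).map (gfun m n) ++
            (List.range ((B - A - 2) + 2)).map (fun p => gfun m n (A + 1 + p)) := by
          rw [List.range_add, List.map_append, List.map_map]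
          rfl
        rw [if_neg (by omega), if_neg (by omega), hLL, hsplit]
        congr 1
        rw [List.flatMap_cons, List.flatMap_nil, List.append_nil, hkval]
        obtain ⟨hstart, hend, hmid⟩ := blockt hm h2m hcop t ht1 (by omega) hBA
        rw [← map_range_block (fun p => gfun m n (A + 1 + p)) (B - A - 2)
          (by simpa using hstart) (by simpa [add_assoc] using hend) (fun p h1 h2 => hmid p h1 h2)]
  have := main m le_rfl
  rw [if_neg (by omega), Nat.mul_div_cancel_left n hm] at this
  exact this.trans rfl

lemma wword_eq {m n : ℕ} (hm : 0 < m) (h2m : 2*m < n) (hcop : Nat.Coprime m n)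
    (q : ℝ) (hq : q = (m : ℝ) / n) :
    wword q m = (List.range (n-1)).map (gfun m n) := by
  have h1 : List.range (n+1) = List.range n ++ [n] := by rw [List.range_succ]
  have h2 : List.range n = List.range (n-1) ++ [n-1] := by
    conv_lhs => rw [show n = (n-1)+1 by omega]
    rw [List.range_succ]
  rw [wword, cword_eq hm h2m hcop q hq, h1, h2, List.map_append, List.map_append]
  simp

/-- `j`-th letter of `w_q 1` -/
lemma w1_getD {m n : ℕ} (hm : 0 < m) (h2m : 2*m < n) (hcop : Nat.Coprime m n)
    (q : ℝ) (hq : q = (m : ℝ) / n) (j : ℕ) (hj : j < n) :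
    (wword q m ++ [true]).getD j true = decide ((j+1)*m % n < 2*m) := by
  have hw := wword_eq hm h2m hcop q hq
  have hlen : (wword q m ++ [true]).length = n := by
    rw [hw]; simp; omega
  rw [List.getD_eq_getElem _ _ (by omega)]
  rcases Nat.lt_or_ge j (n-1) with h | h
  · rw [List.getElem_append_left (by rw [hw]; simpa using h)]
    have : (wword q m)[j]'(by rw [hw]; simpa using h) = gfun m n j := by
      simp [hw]
    rw [this]
    have hne : (j+1)*m % n ≠ 0 := by
      intro h0
      have hdvd : n ∣ (j+1)*m := Nat.dvd_of_mod_eq_zero h0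
      have : n ∣ (j+1) := (hcop.symm).dvd_of_dvd_mul_right hdvd
      have := Nat.le_of_dvd (by omega) this
      omega
    simp only [gfun, decide_eq_decide]
    omega
  · have hj' : j = n - 1 := by omega
    rw [List.getElem_append_right (by rw [hw]; simp; omega)]
    have hmod : (j+1)*m % n = 0 := by
      rw [show j + 1 = n by omega, Nat.mul_mod_right]
    simp [hmod, hm]

/-- `j`-th letter of `ŵ_q 1` -/
lemma e1_getD {m n : ℕ} (hm : 0 < m) (h2m : 2*m < n) (hcop : Nat.Coprime m n)
    (q : ℝ) (hq : q = (m : ℝ) / n) (j : ℕ) (hj : j < n) :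
    ((wword q m).reverse ++ [true]).getD j true =
      decide ((j+1)*m % n = 0 ∨ n - 2*m < (j+1)*m % n) := by
  have hw := wword_eq hm h2m hcop q hq
  have hlenw : (wword q m).length = n - 1 := by rw [hw]; simp
  rw [List.getD_eq_getElem _ _ (by simp [hlenw]; omega)]
  rcases Nat.lt_or_ge j (n-1) with h | h
  · rw [List.getElem_append_left (by simpa [hlenw] using h)]
    rw [List.getElem_reverse]
    have hval : (wword q m)[(wword q m).length - 1 - j]'(by omega) = gfun m n (n-2-j) := by
      simp only [hw, List.getElem_map, List.getElem_range, List.length_map, List.length_range]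
      first
      | rfl
      | (congr 1; omega)
    rw [hval]
    have hu0 : (j+1)*m % n ≠ 0 := by
      intro h0
      have hdvd : n ∣ (j+1)*m := Nat.dvd_of_mod_eq_zero h0
      have := Nat.le_of_dvd (by omega) ((hcop.symm).dvd_of_dvd_mul_right hdvd)
      omega
    set u := (j+1)*m % n with hu
    set d := (j+1)*m / n with hd
    have hun : u < n := Nat.mod_lt _ (by omega)
    have hdm : n * d + u = (j+1)*m := Nat.div_add_mod _ n
    have hdlt : d < m := by
      have hlt : (j+1)*m < n*m := mul_lt_mul_of_pos_right (by omega) hm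
      exact Nat.div_lt_of_lt_mul hlt
    clear_value u d
    clear hu hd
    have hkey : (n-2-j+1)*m = (n - u) + (m - d - 1)*n := by
      have hdmz : (n:ℤ) * d + u = ((j:ℤ)+1)*m := by exact_mod_cast hdm
      zify [show j ≤ n - 2 by omega, show 2 ≤ n by omega, show u ≤ n by omega,
        show 1 ≤ m - d by omega, show d ≤ m by omega]
      linarith
    simp only [gfun, decide_eq_decide, hkey, Nat.add_mul_mod_self_right,
      Nat.mod_eq_of_lt (show n - u < n by omega)]
    omega
  · have hj' : j = n - 1 := by omega
    rw [List.getElem_append_right (by simp [hlenw]; omega)]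
    have hmod : (j+1)*m % n = 0 := by
      rw [show j + 1 = n by omega, Nat.mul_mod_right]
    simp [hmod]

theorem shift_rhe_eq_lhe (m n : ℕ) (hm : 0 < m) (hcop : Nat.Coprime m n)
    (q : ℝ) (hq : q = (m : ℝ) / n) (hq0 : 0 < q) (hq2 : q < 1 / 2) :
    ∃ N : ℕ, ∀ i : ℕ, rhe q m (i + N) = lhe q m i := by
  have hn : 0 < n := by
    rcases Nat.eq_zero_or_pos n with rfl | h
    · rw [hq] at hq0; simp at hq0
    · exact h
  have h2m : 2*m < n := by
    rw [hq, div_lt_div_iff₀ (by exact_mod_cast hn) (by norm_num)] at hq2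
    have h' : (m:ℝ) * 2 < n := by linarith
    have h'' : m * 2 < n := by exact_mod_cast h'
    omega
  obtain ⟨v, -, hv⟩ := Nat.exists_mul_mod_eq_one_of_coprime hcop (by omega)
  obtain ⟨N, hNdef⟩ : ∃ N, N = v % n + n := ⟨_, rfl⟩
  refine ⟨N, fun i => ?_⟩
  have hN2 : 2 ≤ N := by omega
  have hNm : N*m % n = 1 := by
    have h1 : N*m = (v % n)*m + m*n := by rw [hNdef]; ring
    rw [h1, Nat.add_mul_mod_self_right, Nat.mod_mul_mod, mul_comm v m, hv]
  -- lengths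
  have hw := wword_eq hm h2m hcop q hq
  have len1 : (wword q m ++ [true]).length = n := by rw [hw]; simp; omega
  have len2 : ((wword q m).reverse ++ [true]).length = n := by rw [hw]; simp; omega
  -- unfold both sides
  have hlhe : lhe q m i = decide ((i+1)*m % n < 2*m) := by
    rw [lhe, perSeq, len1, w1_getD hm h2m hcop q hq _ (Nat.mod_lt _ hn)]
    have : ((i % n) + 1) * m % n = (i+1)*m % n :=
      (((Nat.mod_modEq i n).add_right 1).mul_right m)
    rw [this]
  have hrhe : rhe q m (i + N) =
      decide ((i+N-1)*m % n = 0 ∨ n - 2*m < (i+N-1)*m % n) := by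
    rw [rhe]
    rw [if_neg (by omega), if_neg (by omega), perSeq, len2,
      e1_getD hm h2m hcop q hq _ (Nat.mod_lt _ hn)]
    have h1 : (((i + N - 2) % n) + 1) * m % n = ((i+N-2)+1)*m % n :=
      (((Nat.mod_modEq (i+N-2) n).add_right 1).mul_right m)
    rw [h1, show i + N - 2 + 1 = i + N - 1 by omega]
  rw [hlhe, hrhe, decide_eq_decide]
  -- core number theory
  have hc : (N-2)*m % n = n+1-2*m := by
    have h1 : (N-2)*m + 2*m = N*m := by
      rw [← Nat.add_mul, show N - 2 + 2 = N by omega]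
    have hk : n*(N*m/n) + 1 = N*m := by
      have h := Nat.div_add_mod (N*m) n
      rw [hNm] at h; exact h
    set k := N*m/n with hkdef
    clear_value k
    have hk1 : 1 ≤ k := by
      rcases Nat.eq_zero_or_pos k with rfl | h
      · exfalso
        have h2 : 2*1 ≤ N*m := Nat.mul_le_mul hN2 hm
        omega
      · exact h
    have hval : (N-2)*m = (n+1-2*m) + (k-1)*n := by
      zify [show 2 ≤ N by omega, show 2*m ≤ n+1 by omega, show 1 ≤ k by omega] at h1 hk ⊢
      linarith
    rw [hval, Nat.add_mul_mod_self_right, Nat.mod_eq_of_lt (by omega)]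
  have hsplit : (i+N-1)*m = (i+1)*m + (N-2)*m := by
    rw [← Nat.add_mul]
    congr 1
    omega
  have hmod : (i+N-1)*m % n = ((i+1)*m % n + (n+1-2*m)) % n := by
    rw [hsplit, Nat.add_mod, hc]
  set s := (i+1)*m % n with hsdef
  have hs : s < n := Nat.mod_lt _ hn
  clear_value s
  rw [hmod]
  rcases Nat.lt_or_ge (s + (n+1-2*m)) n with h | h
  · rw [Nat.mod_eq_of_lt h]
    omega
  · rw [Nat.mod_eq_sub_mod h, Nat.mod_eq_of_lt (by omega)]
    omega
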